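/- arXiv:2003.03805 — 5 statements merged into one kernel-verified Lean document; each statement's English description precedes it below -/
import Mathlib

section
/- In R = MvPowerSeries (Fin m) ℚ one has the identity Td · (Σ_{r=0}^m (−1)^r · ch_r) = e_m; that is, the Todd class times the alternating sum of the Chern characters of the exterior powers of the dual bundle, written in Chern roots, equals the top elementary symmetric polynomial ∏_{j=1}^m X_j. -/
open Finset

noncomputable section

/-- The element of `MvPowerSeries (Fin m) ℚ` obtained by substituting the variable `X j`
into a one-variable formal power series `f`. -/
def substAt {m : ℕ} (j : Fin m) (f : PowerSeries ℚ) : MvPowerSeries (Fin m) ℚ :=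
  fun n => if n.support ⊆ {j} then PowerSeries.coeff (R := ℚ) (n j) f else 0

/-- The one-variable power series `exp (−X) = Σ_{n ≥ 0} (−X)^n / n!`. -/
def expNeg : PowerSeries ℚ := PowerSeries.mk fun n => (-1) ^ n / n.factorial

/-- `ch m r = Σ_{S ⊆ Fin m, |S| = r} ∏_{j ∈ S} exp (−X j)`, the `r`-th Chern character
term of the exterior powers, written in Chern roots. -/
def ch (m : ℕ) (r : ℕ) : MvPowerSeries (Fin m) ℚ :=
  ∑ S ∈ Finset.powersetCard r (Finset.univ : Finset (Fin m)),
    ∏ j ∈ S, substAt j expNeg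

/-- `esymm m k = Σ_{S ⊆ Fin m, |S| = k} ∏_{j ∈ S} X j`, the `k`-th elementary symmetric
polynomial of the variables, as a multivariate power series. -/
def esymm (m : ℕ) (k : ℕ) : MvPowerSeries (Fin m) ℚ :=
  ∑ S ∈ Finset.powersetCard k (Finset.univ : Finset (Fin m)),
    ∏ j ∈ S, MvPowerSeries.X j

/-- The Todd class `Td = ∏_{j=1}^m φ(X_j)` written in Chern roots, where `φ` is the
Todd series `X/(1 − e^{−X})`. -/
def Td (m : ℕ) (φ : PowerSeries ℚ) : MvPowerSeries (Fin m) ℚ :=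
  ∏ j : Fin m, substAt j φ

lemma substAt_coeff {m : ℕ} (j : Fin m) (f : PowerSeries ℚ) (n : Fin m →₀ ℕ) :
    MvPowerSeries.coeff (R := ℚ) n (substAt j f)
      = if n.support ⊆ {j} then PowerSeries.coeff (R := ℚ) (n j) f else 0 := rfl

lemma substAt_coeff_single {m : ℕ} (j : Fin m) (f : PowerSeries ℚ) (k : ℕ) :
    MvPowerSeries.coeff (R := ℚ) (Finsupp.single j k) (substAt j f) = PowerSeries.coeff (R := ℚ) k f := by
  rw [substAt_coeff, if_pos (Finsupp.support_single_subset), Finsupp.single_eq_same]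

lemma substAt_one {m : ℕ} (j : Fin m) : substAt j 1 = 1 := by
  ext n
  rw [substAt_coeff, MvPowerSeries.coeff_one]
  split_ifs with h1 h2 h3
  · rw [h2]; simp
  · rw [PowerSeries.coeff_one, if_neg]
    intro hn
    apply h2
    rw [Finsupp.support_subset_singleton.mp h1, hn, Finsupp.single_zero]
  · exact absurd (by rw [h3]; simp) h1
  · rfl

lemma substAt_mul {m : ℕ} (j : Fin m) (f g : PowerSeries ℚ) :
    substAt j (f * g) = substAt j f * substAt j g := by
  ext n
  rw [MvPowerSeries.coeff_mul, substAt_coeff]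
  by_cases h : n.support ⊆ ({j} : Finset (Fin m))
  · rw [if_pos h]
    have hn : n = Finsupp.single j (n j) := Finsupp.support_subset_singleton.mp h
    conv_rhs => rw [hn]
    rw [Finsupp.antidiagonal_single, Finset.sum_map, PowerSeries.coeff_mul]
    refine Finset.sum_congr rfl fun p _ => ?_
    simp only [Function.Embedding.coe_prodMap, Function.Embedding.coeFn_mk, Prod.map_fst,
      Prod.map_snd, substAt_coeff_single]
  · rw [if_neg h]
    symm
    apply Finset.sum_eq_zero
    rintro ⟨p, q⟩ hpq
    rw [Finset.HasAntidiagonal.mem_antidiagonal] at hpq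
    have : ¬ p.support ⊆ ({j} : Finset (Fin m)) ∨ ¬ q.support ⊆ ({j} : Finset (Fin m)) := by
      by_contra hc
      push_neg at hc
      exact h (hpq ▸ (Finsupp.support_add).trans (Finset.union_subset hc.1 hc.2))
    rcases this with hp | hq
    · simp only [substAt_coeff]; rw [if_neg hp, zero_mul]
    · simp only [substAt_coeff]; rw [if_neg hq, mul_zero]

lemma substAt_sub {m : ℕ} (j : Fin m) (f g : PowerSeries ℚ) :
    substAt j (f - g) = substAt j f - substAt j g := by
  ext n
  rw [map_sub, substAt_coeff, substAt_coeff, substAt_coeff]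
  split_ifs with h
  · rw [map_sub]
  · rw [sub_zero]

lemma substAt_X {m : ℕ} (j : Fin m) : substAt j PowerSeries.X = MvPowerSeries.X j := by
  ext n
  rw [substAt_coeff, MvPowerSeries.coeff_X]
  split_ifs with h1 h2 h3
  · rw [h2, Finsupp.single_eq_same, PowerSeries.coeff_X, if_pos rfl]
  · rw [PowerSeries.coeff_X, if_neg]
    intro hn
    exact h2 (by rw [Finsupp.support_subset_singleton.mp h1, hn])
  · exact absurd (by rw [h3]; exact Finsupp.support_single_subset) h1
  · rfl

/-- `Td · (Σ_{r=0}^m (−1)^r · ch_r) = e_m`. -/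
theorem td_mul_alternating_sum_ch (m : ℕ) (φ : PowerSeries ℚ)
    (hφ : φ * (1 - expNeg) = PowerSeries.X) :
    Td m φ * ∑ r ∈ Finset.range (m + 1), (-1 : MvPowerSeries (Fin m) ℚ) ^ r * ch m r
      = esymm m m := by
  have key : ∀ j : Fin m,
      substAt j φ * ((1 : MvPowerSeries (Fin m) ℚ) - substAt j expNeg) = MvPowerSeries.X j := by
    intro j
    rw [← substAt_one j, ← substAt_sub, ← substAt_mul, hφ, substAt_X]
  have hsum : ∑ r ∈ Finset.range (m + 1), (-1 : MvPowerSeries (Fin m) ℚ) ^ r * ch m r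
      = ∏ j : Fin m, ((1 : MvPowerSeries (Fin m) ℚ) - substAt j expNeg) := by
    calc ∑ r ∈ Finset.range (m + 1), (-1 : MvPowerSeries (Fin m) ℚ) ^ r * ch m r
        = ∑ S ∈ (Finset.univ : Finset (Fin m)).powerset,
            (-1 : MvPowerSeries (Fin m) ℚ) ^ S.card * ∏ j ∈ S, substAt j expNeg := by
          rw [Finset.sum_powerset]
          rw [show ((Finset.univ : Finset (Fin m)).card) = m by simp]
          refine Finset.sum_congr rfl fun r _ => ?_
          rw [ch, Finset.mul_sum]
          refine Finset.sum_congr rfl fun S hS => ?_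
          rw [(Finset.mem_powersetCard.mp hS).2]
      _ = ∏ j : Fin m, ((1 : MvPowerSeries (Fin m) ℚ) - substAt j expNeg) := by
          symm
          calc ∏ j : Fin m, ((1 : MvPowerSeries (Fin m) ℚ) - substAt j expNeg)
              = ∏ j : Fin m, (-substAt j expNeg + 1) :=
                Finset.prod_congr rfl fun j _ => by ring
            _ = ∑ S ∈ (Finset.univ : Finset (Fin m)).powerset,
                  (∏ j ∈ S, -substAt j expNeg) *
                    ∏ j ∈ Finset.univ \ S, (1 : MvPowerSeries (Fin m) ℚ) :=
                Finset.prod_add _ _ _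
            _ = ∑ S ∈ (Finset.univ : Finset (Fin m)).powerset,
                  (-1 : MvPowerSeries (Fin m) ℚ) ^ S.card * ∏ j ∈ S, substAt j expNeg := by
                refine Finset.sum_congr rfl fun S _ => ?_
                rw [Finset.prod_const_one, mul_one,
                  show (∏ j ∈ S, -substAt j expNeg)
                    = ∏ j ∈ S, (-1 : MvPowerSeries (Fin m) ℚ) * substAt j expNeg from
                    Finset.prod_congr rfl fun j _ => by ring,
                  Finset.prod_mul_distrib, Finset.prod_const]
  have hesymm : esymm m m = ∏ j : Fin m, (MvPowerSeries.X j : MvPowerSeries (Fin m) ℚ) := by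
    have hp : Finset.powersetCard m (Finset.univ : Finset (Fin m))
        = {(Finset.univ : Finset (Fin m))} := by
      simpa using Finset.powersetCard_self (Finset.univ : Finset (Fin m))
    rw [esymm, hp, Finset.sum_singleton]
  rw [hsum, Td, ← Finset.prod_mul_distrib, hesymm]
  exact Finset.prod_congr rfl fun j _ => key j

end
end

section
/- Let A be a commutative ring, m ∈ ℕ, and x : Fin m → A. Then Σ_{r=1}^m (−1)^r · r · e_r(x) = − Σ_{j ∈ Fin m} x_j · ∏_{k ≠ j} (1 − x_k). -/
open Finset

/-- `e_r(x) = Σ_{S ⊆ Fin m, |S| = r} ∏_{j ∈ S} x_j`, the `r`-th elementary symmetric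
polynomial of the values `x_1, …, x_m` (with `e_0(x) = 1`). -/
def esymmVal {A : Type*} [CommRing A] {m : ℕ} (x : Fin m → A) (r : ℕ) : A :=
  ∑ S ∈ Finset.powersetCard r (Finset.univ : Finset (Fin m)), ∏ j ∈ S, x j

lemma prod_one_sub_eq {A : Type*} [CommRing A] {ι : Type*} [DecidableEq ι]
    (x : ι → A) (s : Finset ι) :
    ∏ k ∈ s, (1 - x k) = ∑ t ∈ s.powerset, (-1 : A) ^ t.card * ∏ k ∈ t, x k := by
  have h : ∀ k ∈ s, (1 : A) - x k = -x k + 1 := fun k _ => by ring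
  rw [Finset.prod_congr rfl h, Finset.prod_add]
  refine Finset.sum_congr rfl fun t _ => ?_
  simp only [Finset.prod_const_one, mul_one]
  calc ∏ i ∈ t, -x i = ∏ i ∈ t, (-1 : A) * x i := by simp
    _ = (-1 : A) ^ t.card * ∏ i ∈ t, x i := by
        rw [Finset.prod_mul_distrib, Finset.prod_const]

/-- `Σ_{r=1}^m (−1)^r · r · e_r(x) = − Σ_j x_j · ∏_{k ≠ j} (1 − x_k)`. -/
theorem alternating_weighted_sum_esymm {A : Type*} [CommRing A] (m : ℕ) (x : Fin m → A) :
    ∑ r ∈ Finset.Icc 1 m, (-1 : A) ^ r * (r : A) * esymmVal x r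
      = -∑ j : Fin m, x j * ∏ k ∈ Finset.univ.erase j, (1 - x k) := by
  classical
  -- LHS as a sum over the full powerset
  have hLHS : ∑ r ∈ Finset.Icc 1 m, (-1 : A) ^ r * (r : A) * esymmVal x r
      = ∑ T ∈ (Finset.univ : Finset (Fin m)).powerset,
          (-1 : A) ^ T.card * (T.card : A) * ∏ j ∈ T, x j := by
    rw [Finset.sum_powerset]
    rw [Finset.card_univ, Fintype.card_fin]
    have hins : Finset.range (m + 1) = insert 0 (Finset.Icc 1 m) := by
      ext a; simp only [Finset.mem_range, Finset.mem_insert, Finset.mem_Icc]; omega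
    rw [hins, Finset.sum_insert (by simp)]
    have h0 : ∑ T ∈ Finset.powersetCard 0 (Finset.univ : Finset (Fin m)),
        (-1 : A) ^ T.card * (T.card : A) * ∏ j ∈ T, x j = 0 := by
      simp
    rw [h0, zero_add]
    refine Finset.sum_congr rfl fun r _ => ?_
    rw [esymmVal, Finset.mul_sum]
    refine Finset.sum_congr rfl fun T hT => ?_
    rw [(Finset.mem_powersetCard.mp hT).2]
  rw [hLHS]
  -- rewrite each term as a sum over elements of T
  have hsum : ∀ T : Finset (Fin m),
      (-1 : A) ^ T.card * (T.card : A) * ∏ j ∈ T, x j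
        = ∑ j ∈ T, (-1 : A) ^ T.card * ∏ k ∈ T, x k := by
    intro T
    rw [Finset.sum_const, nsmul_eq_mul]
    ring
  simp_rw [hsum]
  -- rewrite the RHS products
  have hRHS : -∑ j : Fin m, x j * ∏ k ∈ Finset.univ.erase j, (1 - x k)
      = ∑ j : Fin m, ∑ t ∈ ((Finset.univ : Finset (Fin m)).erase j).powerset,
          -((-1 : A) ^ t.card * (x j * ∏ k ∈ t, x k)) := by
    rw [← Finset.sum_neg_distrib]
    refine Finset.sum_congr rfl fun j _ => ?_
    rw [prod_one_sub_eq, Finset.mul_sum, ← Finset.sum_neg_distrib]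
    refine Finset.sum_congr rfl fun t _ => ?_
    ring
  rw [hRHS]
  -- express both sides as sums over sigma types and exhibit the bijection
  rw [Finset.sum_sigma', Finset.sum_sigma']
  refine Finset.sum_nbij' (fun p => ⟨p.2, p.1.erase p.2⟩) (fun q => ⟨insert q.1 q.2, q.1⟩)
    ?_ ?_ ?_ ?_ ?_
  · rintro ⟨T, j⟩ hp
    simp only [Finset.mem_sigma, Finset.mem_powerset] at hp ⊢
    exact ⟨Finset.mem_univ _, fun k hk => Finset.mem_erase.mpr
      ⟨(Finset.mem_erase.mp hk).1, Finset.mem_univ _⟩⟩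
  · rintro ⟨j, t⟩ hq
    simp only [Finset.mem_sigma, Finset.mem_powerset] at hq ⊢
    exact ⟨fun k _ => Finset.mem_univ _, Finset.mem_insert_self _ _⟩
  · rintro ⟨T, j⟩ hp
    simp only [Finset.mem_sigma, Finset.mem_powerset] at hp
    simp [Finset.insert_erase hp.2]
  · rintro ⟨j, t⟩ hq
    simp only [Finset.mem_sigma, Finset.mem_powerset] at hq
    have hj : j ∉ t := fun h => (Finset.mem_erase.mp (hq.2 h)).1 rfl
    simp [Finset.erase_insert hj]
  · rintro ⟨T, j⟩ hp
    simp only [Finset.mem_sigma, Finset.mem_powerset] at hp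
    have hjT : j ∈ T := hp.2
    have hcard : T.card = (T.erase j).card + 1 := by
      rw [Finset.card_erase_of_mem hjT]
      have := Finset.card_pos.mpr ⟨j, hjT⟩
      omega
    have h1 : x j * ∏ k ∈ T.erase j, x k = ∏ k ∈ T, x k := Finset.mul_prod_erase T x hjT
    rw [hcard, pow_succ, ← h1]
    ring
end

section
/- Let A be a commutative ring, m ∈ ℕ, and x : Fin m → A. Then Σ_{r=2}^m (−1)^r · r(r−1) · e_r(x) = Σ_{(j,k), j ≠ k} x_j · x_k · ∏_{l ∉ {j,k}} (1 − x_l), where the sum on the right runs over all ordered pairs of distinct indices j, k ∈ Fin m. -/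
open Finset

/-- Expansion of `∏ (1 - x l)` as an alternating sum over subsets. -/
lemma expand_prod_one_sub {A : Type*} [CommRing A] {m : ℕ} (x : Fin m → A)
    (s : Finset (Fin m)) :
    ∏ l ∈ s, (1 - x l) = ∑ T ∈ s.powerset, (-1 : A) ^ T.card * ∏ l ∈ T, x l := by
  have h := Finset.prod_add (fun l => -x l) (fun _ => (1 : A)) s
  simp only [prod_const_one, mul_one] at h
  have h2 : ∀ l, (1 : A) - x l = -x l + 1 := fun l => by ring
  simp_rw [h2, h]
  refine Finset.sum_congr rfl fun T _ => ?_
  rw [show (fun l => -x l) = (fun l => (-1 : A) * x l) by funext l; ring,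
    Finset.prod_mul_distrib, Finset.prod_const]

/-- The term for an ordered pair `(j, k)` of distinct indices, as a sum over the
subsets containing both `j` and `k`. -/
lemma pair_term_eq {A : Type*} [CommRing A] {m : ℕ} (x : Fin m → A) (j k : Fin m)
    (hjk : k ≠ j) :
    x j * x k * ∏ l ∈ ((univ : Finset (Fin m)).erase j).erase k, (1 - x l)
      = ∑ S ∈ (univ : Finset (Fin m)).powerset.filter (fun S => j ∈ S ∧ k ∈ S),
          (-1 : A) ^ S.card * ∏ l ∈ S, x l := by
  rw [expand_prod_one_sub, Finset.mul_sum]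
  refine Finset.sum_bij' (fun T _ => insert j (insert k T))
    (fun S _ => (S.erase j).erase k) ?_ ?_ ?_ ?_ ?_
  · intro T hT
    simp [Finset.mem_filter]
  · intro S hS
    simp only [mem_powerset]
    exact Finset.erase_subset_erase _ (Finset.erase_subset_erase _ (Finset.subset_univ _))
  · intro T hT
    simp only [mem_powerset] at hT
    have hjT : j ∉ T := fun h => by simpa using Finset.mem_of_mem_erase (hT h)
    have hkT : k ∉ T := fun h => by simpa using hT h
    have hjkT : j ∉ insert k T := by simp [hjT, hjk.symm]
    rw [Finset.erase_insert hjkT, Finset.erase_insert hkT]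
  · intro S hS
    simp only [mem_powerset, mem_filter] at hS
    obtain ⟨-, hj, hk⟩ := hS
    rw [Finset.insert_erase (Finset.mem_erase.2 ⟨hjk, hk⟩), Finset.insert_erase hj]
  · intro T hT
    simp only [mem_powerset] at hT
    have hjT : j ∉ T := fun h => by simpa using Finset.mem_of_mem_erase (hT h)
    have hkT : k ∉ T := fun h => by simpa using hT h
    have hjkT : j ∉ insert k T := by simp [hjT, hjk.symm]
    rw [Finset.card_insert_of_notMem hjkT, Finset.card_insert_of_notMem hkT,
      Finset.prod_insert hjkT, Finset.prod_insert hkT]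
    ring

/-- `Σ_{r=2}^m (−1)^r · r(r−1) · e_r(x)
      = Σ_{(j,k), j ≠ k} x_j · x_k · ∏_{l ∉ {j,k}} (1 − x_l)`,
where the sum on the right runs over all ordered pairs of distinct indices. -/
theorem alternating_second_weighted_sum_esymm {A : Type*} [CommRing A] (m : ℕ)
    (x : Fin m → A) :
    ∑ r ∈ Finset.Icc 2 m, (-1 : A) ^ r * (r : A) * ((r : A) - 1) * esymmVal x r
      = ∑ j : Fin m, ∑ k ∈ Finset.univ.erase j,
          x j * x k * ∏ l ∈ (Finset.univ.erase j).erase k, (1 - x l) := by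
  -- rewrite RHS using pair_term_eq
  have hRHS : ∀ j : Fin m, ∀ k ∈ Finset.univ.erase j,
      x j * x k * ∏ l ∈ (Finset.univ.erase j).erase k, (1 - x l)
        = ∑ S ∈ (univ : Finset (Fin m)).powerset.filter (fun S => j ∈ S ∧ k ∈ S),
            (-1 : A) ^ S.card * ∏ l ∈ S, x l := by
    intro j k hk
    exact pair_term_eq x j k (Finset.mem_erase.1 hk).1
  rw [Finset.sum_congr rfl (fun j _ => Finset.sum_congr rfl (hRHS j))]
  -- turn inner sums into ite-sums over univ/powerset
  simp_rw [Finset.sum_filter, ← Finset.filter_ne', Finset.sum_filter]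
  have ite_sum : ∀ (c : Prop) [Decidable c] (s : Finset (Finset (Fin m)))
      (f : Finset (Fin m) → A),
      (if c then ∑ S ∈ s, f S else 0) = ∑ S ∈ s, if c then f S else 0 := by
    intro c _ s f; split <;> simp
  simp_rw [ite_sum]
  -- swap sums so S is outermost
  rw [Finset.sum_congr rfl fun j (_ : j ∈ (univ : Finset (Fin m))) => Finset.sum_comm,
    Finset.sum_comm]
  -- for each subset S, the double sum counts the ordered pairs of distinct elements of S
  have claim : ∀ S : Finset (Fin m),
      (∑ j : Fin m, ∑ k : Fin m, if k ≠ j then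
          (if j ∈ S ∧ k ∈ S then (-1 : A) ^ S.card * ∏ l ∈ S, x l else 0) else 0)
        = (-1 : A) ^ S.card * (S.card : A) * ((S.card : A) - 1) * ∏ l ∈ S, x l := by
    intro S
    simp_rw [← ite_and]
    rw [← Finset.sum_product', Finset.sum_ite, Finset.sum_const_zero, add_zero]
    have hset : ((univ : Finset (Fin m)) ×ˢ univ).filter
        (fun p => p.2 ≠ p.1 ∧ p.1 ∈ S ∧ p.2 ∈ S) = S.offDiag := by
      ext p
      simp only [Finset.mem_filter, Finset.mem_product, Finset.mem_univ, true_and,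
        Finset.mem_offDiag]
      tauto
    rw [hset, Finset.sum_const, Finset.offDiag_card, nsmul_eq_mul]
    have h : S.card ≤ S.card * S.card := by nlinarith
    rw [Nat.cast_sub h]
    push_cast
    ring
  rw [Finset.sum_congr rfl (fun S (_ : S ∈ (univ : Finset (Fin m)).powerset) => claim S),
    Finset.sum_powerset]
  have hcard : #(univ : Finset (Fin m)) = m := by simp
  rw [hcard]
  have inner : ∀ r ∈ Finset.range (m + 1),
      (∑ S ∈ Finset.powersetCard r (univ : Finset (Fin m)),
          (-1 : A) ^ S.card * (S.card : A) * ((S.card : A) - 1) * ∏ l ∈ S, x l)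
        = (-1 : A) ^ r * (r : A) * ((r : A) - 1) * esymmVal x r := by
    intro r _
    rw [esymmVal, Finset.mul_sum]
    refine Finset.sum_congr rfl fun S hS => ?_
    rw [(Finset.mem_powersetCard.1 hS).2]
  rw [Finset.sum_congr rfl inner]
  refine Finset.sum_subset ?_ ?_
  · intro r hr
    simp only [Finset.mem_Icc] at hr
    simp only [Finset.mem_range]
    omega
  · intro r hr hr2
    simp only [Finset.mem_range] at hr
    simp only [Finset.mem_Icc] at hr2
    have : r = 0 ∨ r = 1 := by omega
    rcases this with rfl | rfl <;> simp
end

section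
/- Let r, s ∈ ℕ with s ≤ r, let d ∈ ℝ with d ≠ 0, and let μ : Fin (s+1) → ℝ satisfy μ_j + d ≠ 0 for every j and Σ_j μ_j = −(r+1)·d. Then Σ_{J ⊆ Fin (s+1)} (∏_{j ∈ J} (−μ_j/(μ_j + d))) · (r + 1 − |J|) = 0, where the sum runs over all subsets J of Fin (s+1) and r + 1 − |J| is taken as an integer (note |J| ≤ s + 1 ≤ r + 1). -/
open Finset

lemma sum_powerset_prod (S : Finset ℕ) : True := trivial

lemma aux_prod_one_add {ι : Type*} [DecidableEq ι] (S : Finset ι) (a : ι → ℝ) :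
    ∑ J ∈ S.powerset, ∏ j ∈ J, a j = ∏ j ∈ S, (1 + a j) := by
  induction S using Finset.induction_on with
  | empty => simp
  | @insert x S hx ih =>
    rw [Finset.sum_powerset_insert hx, Finset.prod_insert hx, ← ih]
    have : ∑ J ∈ S.powerset, ∏ j ∈ insert x J, a j
        = ∑ J ∈ S.powerset, a x * ∏ j ∈ J, a j := by
      refine Finset.sum_congr rfl fun J hJ => ?_
      rw [Finset.prod_insert]
      intro hxJ
      exact hx (Finset.mem_powerset.mp hJ hxJ)
    rw [this, ← Finset.mul_sum]
    ring

lemma aux_card_weighted {ι : Type*} [DecidableEq ι] (S : Finset ι) (a : ι → ℝ) :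
    ∑ J ∈ S.powerset, (∏ j ∈ J, a j) * (J.card : ℝ)
      = ∑ i ∈ S, a i * ∏ j ∈ S.erase i, (1 + a j) := by
  induction S using Finset.induction_on with
  | empty => simp
  | @insert x S hx ih =>
    rw [Finset.sum_powerset_insert hx, Finset.sum_insert hx, ih]
    have h1 : ∑ J ∈ S.powerset, (∏ j ∈ insert x J, a j) * ((insert x J).card : ℝ)
        = ∑ J ∈ S.powerset, a x * ((∏ j ∈ J, a j) * (J.card : ℝ) + ∏ j ∈ J, a j) := by
      refine Finset.sum_congr rfl fun J hJ => ?_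
      have hxJ : x ∉ J := fun hxJ => hx (Finset.mem_powerset.mp hJ hxJ)
      rw [Finset.prod_insert hxJ, Finset.card_insert_of_notMem hxJ]
      push_cast; ring
    rw [h1]
    have h2 : (insert x S).erase x = S := Finset.erase_insert hx
    rw [h2]
    have h3 : ∀ i ∈ S, a i * ∏ j ∈ (insert x S).erase i, (1 + a j)
        = (1 + a x) * (a i * ∏ j ∈ S.erase i, (1 + a j)) := by
      intro i hi
      have hix : i ≠ x := fun h => hx (h ▸ hi)
      rw [Finset.erase_insert_of_ne hix.symm,
        Finset.prod_insert (fun h => hx (Finset.mem_of_mem_erase h))]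
      ring
    rw [Finset.sum_congr rfl h3]
    have e1 : ∑ J ∈ S.powerset, a x * ((∏ j ∈ J, a j) * (J.card : ℝ) + ∏ j ∈ J, a j)
        = a x * (∑ J ∈ S.powerset, (∏ j ∈ J, a j) * (J.card : ℝ))
          + a x * ∑ J ∈ S.powerset, ∏ j ∈ J, a j := by
      rw [← Finset.mul_sum, Finset.sum_add_distrib, mul_add]
    rw [e1, ih, aux_prod_one_add, ← Finset.mul_sum]
    ring

/-- Vanishing of the weighted Euler characteristic `χ_d(Z, γ_Z) = 0` of a `ℂP^r`-fiber:
if the multiplicities `μ_j` of the `s+1` divisor components satisfy `μ_j + d ≠ 0` and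
`Σ_j μ_j = −(r+1)·d`, then
`Σ_{J ⊆ Fin (s+1)} (∏_{j ∈ J} (−μ_j/(μ_j + d))) · (r + 1 − |J|) = 0`,
the factor `r + 1 − |J|` (the Euler characteristic `χ(ℂP^{r−|J|})` of the stratum `D_J`)
being taken as an integer. -/
theorem weighted_euler_char_vanishing (r s : ℕ) (hs : s ≤ r) (d : ℝ) (hd : d ≠ 0)
    (μ : Fin (s + 1) → ℝ) (hμ : ∀ j, μ j + d ≠ 0)
    (hsum : ∑ j, μ j = -((r : ℝ) + 1) * d) :
    ∑ J ∈ (Finset.univ : Finset (Fin (s + 1))).powerset,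
        (∏ j ∈ J, (-(μ j) / (μ j + d))) * (((r : ℤ) + 1 - (J.card : ℤ) : ℤ) : ℝ)
      = 0 := by
  set a : Fin (s + 1) → ℝ := fun j => -(μ j) / (μ j + d) with ha
  have hsplit : ∑ J ∈ (Finset.univ : Finset (Fin (s + 1))).powerset,
      (∏ j ∈ J, a j) * (((r : ℤ) + 1 - (J.card : ℤ) : ℤ) : ℝ)
      = ((r : ℝ) + 1) * (∑ J ∈ (Finset.univ : Finset (Fin (s + 1))).powerset, ∏ j ∈ J, a j)
        - ∑ J ∈ (Finset.univ : Finset (Fin (s + 1))).powerset,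
            (∏ j ∈ J, a j) * (J.card : ℝ) := by
    rw [Finset.mul_sum, ← Finset.sum_sub_distrib]
    refine Finset.sum_congr rfl fun J hJ => ?_
    push_cast; ring
  rw [hsplit, aux_prod_one_add, aux_card_weighted]
  have h1a : ∀ j, 1 + a j = d / (μ j + d) := by
    intro j
    rw [ha]
    rw [eq_div_iff (hμ j), add_mul, div_mul_cancel₀ _ (hμ j)]
    ring
  have ht : ∀ i : Fin (s + 1), a i * ∏ j ∈ (Finset.univ : Finset (Fin (s + 1))).erase i, (1 + a j)
      = -(μ i / d) * ∏ j, (1 + a j) := by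
    intro i
    rw [← Finset.mul_prod_erase Finset.univ (fun j => 1 + a j) (Finset.mem_univ i)]
    rw [h1a i]
    have hai : a i = -(μ i / d) * (d / (μ i + d)) := by
      show -μ i / (μ i + d) = -(μ i / d) * (d / (μ i + d))
      rw [neg_div, neg_mul, neg_inj, div_mul_div_comm]
      rw [div_eq_div_iff (hμ i) (mul_ne_zero hd (hμ i))]
      ring
    rw [hai]
    ring
  rw [Finset.sum_congr rfl fun i _ => ht i, ← Finset.sum_mul]
  have : ∑ i, -(μ i / d) = (r : ℝ) + 1 := by
    have h1 : ∑ i, -(μ i / d) = (∑ i, -(μ i)) / d := by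
      rw [Finset.sum_div]
      exact Finset.sum_congr rfl fun i _ => by ring
    rw [h1, Finset.sum_neg_distrib, hsum]
    field_simp
  rw [this]
  ring
end

section
/- Let r, s ∈ ℕ with s ≤ r, let d ∈ ℝ with d ≠ 0, and let μ : Fin (s+1) → ℝ satisfy μ_j + d ≠ 0 for every j and Σ_j μ_j = −(r+1)·d. Let f := X^{r−s} · ∏_{j ∈ Fin (s+1)} (X − C(μ_j/(μ_j + d))) ∈ ℝ[X]. Then the formal derivative of f evaluated at 1 equals 0. -/
open Finset Polynomial

lemma derivative_finset_prod' {ι : Type*} [DecidableEq ι] (t : Finset ι) (f : ι → ℝ[X]) :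
    Polynomial.derivative (∏ i ∈ t, f i)
      = ∑ i ∈ t, (∏ j ∈ t.erase i, f j) * Polynomial.derivative (f i) := by
  classical
  induction t using Finset.induction_on with
  | empty => simp
  | @insert a t ha ih =>
      rw [Finset.prod_insert ha, derivative_mul, ih, Finset.sum_insert ha,
        Finset.erase_insert ha, Finset.mul_sum]
      congr 1
      · exact mul_comm _ _
      refine Finset.sum_congr rfl fun b hb => ?_
      rw [Finset.erase_insert_of_ne (by rintro rfl; exact ha hb), Finset.prod_insert
        (fun h => ha (Finset.mem_of_mem_erase h)), mul_assoc]

/-- The polynomial identity `f′(1) = 0` underlying the vanishing of the weighted Euler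
characteristic of a projective-space fiber: for
`f = X^{r−s} · ∏_{j ∈ Fin (s+1)} (X − C (μ_j/(μ_j + d)))` with `s ≤ r`, `d ≠ 0`,
`μ_j + d ≠ 0` and `Σ_j μ_j = -((r : ℝ) + 1) * d`, the derivative of `f` evaluated at `1` is `0`. -/
theorem derivative_eval_one_vanishing (r s : ℕ) (hs : s ≤ r) (d : ℝ) (hd : d ≠ 0)
    (μ : Fin (s + 1) → ℝ) (hμ : ∀ j, μ j + d ≠ 0)
    (hsum : ∑ j, μ j = -((r : ℝ) + 1) * d) :
    Polynomial.eval 1 (Polynomial.derivative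
        ((Polynomial.X : ℝ[X]) ^ (r - s) *
          ∏ j : Fin (s + 1), (Polynomial.X - Polynomial.C (μ j / (μ j + d)))))
      = 0 := by
  have hc : ∀ j, (1:ℝ) - μ j / (μ j + d) = d / (μ j + d) := by
    intro j
    rw [eq_div_iff (hμ j), sub_mul, one_mul, div_mul_cancel₀ _ (hμ j)]
    ring
  rw [derivative_mul, derivative_finset_prod']
  simp only [derivative_X_pow, eval_add, eval_mul, eval_pow, eval_X, one_pow,
    eval_natCast, Polynomial.eval_finset_sum, eval_prod, eval_sub, eval_C,
    derivative_sub, derivative_X, derivative_C, sub_zero, eval_one, mul_one, one_mul]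
  simp only [hc]
  have herase : ∀ j : Fin (s+1), ∏ i ∈ univ.erase j, (d/(μ i + d))
      = (∏ i, d/(μ i + d)) * ((μ j + d)/d) := by
    intro j
    rw [← Finset.prod_erase_mul univ _ (mem_univ j), mul_assoc]
    have h1 : d / (μ j + d) * ((μ j + d) / d) = 1 := by
      rw [div_mul_div_comm, mul_comm d (μ j + d)]
      exact div_self (mul_ne_zero (hμ j) hd)
    rw [h1, mul_one]
  simp only [herase]
  set P : ℝ := ∏ i, d/(μ i + d) with hP
  rw [← Finset.mul_sum, ← Finset.sum_div, Finset.sum_add_distrib, hsum,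
    Finset.sum_const, card_univ, Fintype.card_fin, Nat.cast_sub hs, nsmul_eq_mul]
  have hkey : ((-(↑r+1)*d + (↑(s+1):ℝ)*d)/d : ℝ) = (s : ℝ) - r := by
    field_simp
    push_cast
    ring
  rw [hkey]
  ring
end
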